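/- Let A and B be F_q-subspaces of the algebraic closure of F_q of size q^d with d ≥ 3, and suppose that (A^{-1} ∩ B) ∪ {0} contains a one-dimensional F_{q^{d-1}}-subspace of the algebraic closure. Then |A^{-1} ∩ B| ≤ q^{d-1} + 2q^2 − 3. -/

import Mathlib

open Polynomial



/-- Pure field algebra: if `(fᵢ+β)(gᵢ+α) = D` for `i = 1,2,3` with `fᵢ, gᵢ` in a
"subfield-like" set `E` and `α, β ∉ E`, and `f₁ ≠ f₂`, `f₁ ≠ f₃`, then `f₂ = f₃`. -/
lemma aux_three {K : Type*} [Field K] (E : Set K)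
    (hE0 : (0:K) ∈ E) (hE1 : (1:K) ∈ E)
    (hEsub : ∀ x ∈ E, ∀ y ∈ E, x - y ∈ E)
    (hEmul : ∀ x ∈ E, ∀ y ∈ E, x * y ∈ E)
    (hEinv : ∀ x ∈ E, x⁻¹ ∈ E)
    {α β D : K} (hα : α ∉ E) (hβ : β ∉ E)
    {f₁ f₂ f₃ g₁ g₂ g₃ : K}
    (hf₁ : f₁ ∈ E) (hf₂ : f₂ ∈ E) (hf₃ : f₃ ∈ E)
    (hg₁ : g₁ ∈ E) (hg₂ : g₂ ∈ E) (hg₃ : g₃ ∈ E)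
    (h1 : (f₁ + β) * (g₁ + α) = D)
    (h2 : (f₂ + β) * (g₂ + α) = D)
    (h3 : (f₃ + β) * (g₃ + α) = D)
    (h12 : f₁ ≠ f₂) (h13 : f₁ ≠ f₃) : f₂ = f₃ := by
  have hD : D ≠ 0 := by
    rintro rfl
    rcases mul_eq_zero.mp h1 with h | h
    · exact hβ (by rw [show β = 0 - f₁ by linear_combination h]; exact hEsub _ hE0 _ hf₁)
    · exact hα (by rw [show α = 0 - g₁ by linear_combination h]; exact hEsub _ hE0 _ hg₁)
  have hu₁ : f₁ + β ≠ 0 := fun h => hD (by rw [← h1, h, zero_mul])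
  have hu₂ : f₂ + β ≠ 0 := fun h => hD (by rw [← h2, h, zero_mul])
  have hu₃ : f₃ + β ≠ 0 := fun h => hD (by rw [← h3, h, zero_mul])
  have hd12 : f₂ - f₁ ≠ 0 := sub_ne_zero.mpr (Ne.symm h12)
  have hd13 : f₃ - f₁ ≠ 0 := sub_ne_zero.mpr (Ne.symm h13)
  have hw₂E : (g₁ - g₂) * (f₂ - f₁)⁻¹ ∈ E :=
    hEmul _ (hEsub _ hg₁ _ hg₂) _ (hEinv _ (hEsub _ hf₂ _ hf₁))
  have hw₃E : (g₁ - g₃) * (f₃ - f₁)⁻¹ ∈ E :=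
    hEmul _ (hEsub _ hg₁ _ hg₃) _ (hEinv _ (hEsub _ hf₃ _ hf₁))
  have key2 : (g₁ - g₂) * ((f₁ + β) * (f₂ + β)) = D * (f₂ - f₁) := by
    linear_combination (f₂ + β) * h1 - (f₁ + β) * h2
  have key3 : (g₁ - g₃) * ((f₁ + β) * (f₃ + β)) = D * (f₃ - f₁) := by
    linear_combination (f₃ + β) * h1 - (f₁ + β) * h3
  have hw₂ : (g₁ - g₂) * (f₂ - f₁)⁻¹ * ((f₁ + β) * (f₂ + β)) = D := by
    apply mul_right_cancel₀ hd12
    calc (g₁ - g₂) * (f₂ - f₁)⁻¹ * ((f₁ + β) * (f₂ + β)) * (f₂ - f₁)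
        = (g₁ - g₂) * ((f₁ + β) * (f₂ + β)) * ((f₂ - f₁)⁻¹ * (f₂ - f₁)) := by ring
      _ = (g₁ - g₂) * ((f₁ + β) * (f₂ + β)) := by rw [inv_mul_cancel₀ hd12, mul_one]
      _ = D * (f₂ - f₁) := key2
  have hw₃ : (g₁ - g₃) * (f₃ - f₁)⁻¹ * ((f₁ + β) * (f₃ + β)) = D := by
    apply mul_right_cancel₀ hd13
    calc (g₁ - g₃) * (f₃ - f₁)⁻¹ * ((f₁ + β) * (f₃ + β)) * (f₃ - f₁)
        = (g₁ - g₃) * ((f₁ + β) * (f₃ + β)) * ((f₃ - f₁)⁻¹ * (f₃ - f₁)) := by ring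
      _ = (g₁ - g₃) * ((f₁ + β) * (f₃ + β)) := by rw [inv_mul_cancel₀ hd13, mul_one]
      _ = D * (f₃ - f₁) := key3
  set w₂ := (g₁ - g₂) * (f₂ - f₁)⁻¹ with hw₂def
  set w₃ := (g₁ - g₃) * (f₃ - f₁)⁻¹ with hw₃def
  have hw₂0 : w₂ ≠ 0 := fun h => hD (by rw [← hw₂, h, zero_mul])
  have hw₃0 : w₃ ≠ 0 := fun h => hD (by rw [← hw₃, h, zero_mul])
  have hcan : w₂ * (f₂ + β) = w₃ * (f₃ + β) := by
    apply mul_left_cancel₀ hu₁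
    linear_combination hw₂ - hw₃
  have he : w₂ * w₃⁻¹ * (f₂ + β) = f₃ + β := by
    apply mul_left_cancel₀ hw₃0
    calc w₃ * (w₂ * w₃⁻¹ * (f₂ + β)) = (w₃⁻¹ * w₃) * (w₂ * (f₂ + β)) := by ring
      _ = w₂ * (f₂ + β) := by rw [inv_mul_cancel₀ hw₃0, one_mul]
      _ = w₃ * (f₃ + β) := hcan
  set e := w₂ * w₃⁻¹ with hedef
  have heE : e ∈ E := hEmul _ hw₂E _ (hEinv _ hw₃E)
  have he1 : e = 1 := by
    by_contra hne
    have hsub1 : e - 1 ≠ 0 := sub_ne_zero.mpr hne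
    apply hβ
    have h' : β * (e - 1) = f₃ - e * f₂ := by linear_combination he
    have hβeq : β = (f₃ - e * f₂) * (e - 1)⁻¹ := by
      apply mul_right_cancel₀ hsub1
      calc β * (e - 1) = f₃ - e * f₂ := h'
        _ = (f₃ - e * f₂) * ((e - 1)⁻¹ * (e - 1)) := by rw [inv_mul_cancel₀ hsub1, mul_one]
        _ = (f₃ - e * f₂) * (e - 1)⁻¹ * (e - 1) := by ring
    rw [hβeq]
    exact hEmul _ (hEsub _ hf₃ _ (hEmul _ heE _ hf₂)) _ (hEinv _ (hEsub _ heE _ hE1))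
  have : f₂ + β = f₃ + β := by rw [← he, he1, one_mul]
  exact add_right_cancel this


/-- In an algebraically closed field of characteristic `p`, the set of roots of
`X^N - X` has exactly `N` elements, provided `p ∣ N` and `1 < N`. -/
lemma aux_Ecard {K : Type*} [Field K] [IsAlgClosed K] (p N : ℕ) [CharP K p]
    (hN : 1 < N) (hpN : p ∣ N) :
    Nat.card {t : K | t ^ N = t} = N := by
  classical
  have hE : {t : K | t ^ N = t} = (X ^ N - X : K[X]).rootSet K := by
    ext t
    simp only [Set.mem_setOf_eq, Polynomial.mem_rootSet, map_sub, Polynomial.aeval_X_pow,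
      Polynomial.aeval_X, ne_eq, sub_eq_zero]
    exact ⟨fun h => ⟨fun hXX => FiniteField.X_pow_card_sub_X_ne_zero K hN
      (by rw [hXX, sub_self]), h⟩, fun h => h.2⟩
  rw [hE, Nat.card_eq_fintype_card,
    Polynomial.card_rootSet_eq_natDegree (galois_poly_separable p N hpN)
      (IsAlgClosed.splits _),
    FiniteField.X_pow_card_sub_X_natDegree_eq K hN]

/-- Decomposition of an `F`-subspace `W` of cardinality `N * q` containing `δ • E`:
there is `b ∈ W` with `δ⁻¹ * b ∉ E` such that every element of `W` is `δ * f + l * b`. -/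
lemma aux_decomp {F : Type*} [Field F] [Fintype F] {K : Type*} [Field K] [Algebra F K]
    (E : Set K) (N : ℕ)
    (hEsub : ∀ x ∈ E, ∀ y ∈ E, x - y ∈ E)
    (hEmul : ∀ x ∈ E, ∀ y ∈ E, x * y ∈ E)
    (hEinv : ∀ x ∈ E, x⁻¹ ∈ E)
    (hEF : ∀ l : F, algebraMap F K l ∈ E)
    (hEcard : Nat.card E = N)
    (hq2 : 2 ≤ Fintype.card F) (hN : 0 < N)
    (W : Submodule F K) (hW : Nat.card W = N * Fintype.card F)
    (δ : K) (hδ : δ ≠ 0) (hWE : ∀ e ∈ E, δ * e ∈ W) :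
    ∃ b : K, δ⁻¹ * b ∉ E ∧
      ∀ x ∈ W, ∃ f ∈ E, ∃ l : F, x = δ * f + algebraMap F K l * b := by
  classical
  have hWfinite : Finite W := (Nat.card_pos_iff.mp (by rw [hW]; positivity)).2
  have hWfin : (W : Set K).Finite := Set.finite_coe_iff.mp (by exact hWfinite)
  have hEfinite : Finite E := (Nat.card_pos_iff.mp (by rw [hEcard]; exact hN)).2
  have hEfin : E.Finite := Set.finite_coe_iff.mp hEfinite
  have hinj : Function.Injective (fun e : K => δ * e) := mul_right_injective₀ hδ
  have hδEcard : ((fun e : K => δ * e) '' E).ncard = N := by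
    rw [Set.ncard_image_of_injective _ hinj, ← Nat.card_coe_set_eq]
    exact hEcard
  have hWcard : (W : Set K).ncard = N * Fintype.card F := by
    rw [← Nat.card_coe_set_eq]; exact hW
  have hnsub : ¬ ((W : Set K) ⊆ (fun e : K => δ * e) '' E) := by
    intro hsubset
    have hle := Set.ncard_le_ncard hsubset (hEfin.image _)
    rw [hWcard, hδEcard] at hle
    nlinarith
  obtain ⟨b, hbW, hbδE⟩ := Set.not_subset.mp hnsub
  have hb' : δ⁻¹ * b ∉ E := by
    intro h
    apply hbδE
    have hh : δ * (δ⁻¹ * b) = b := by rw [← mul_assoc, mul_inv_cancel₀ hδ, one_mul]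
    exact ⟨δ⁻¹ * b, h, hh⟩
  set ψ : E × F → K := fun pr => δ * (pr.1 : K) + algebraMap F K pr.2 * b with hψdef
  have hψinj : Function.Injective ψ := by
    rintro ⟨⟨e₁, he₁⟩, l₁⟩ ⟨⟨e₂, he₂⟩, l₂⟩ h
    simp only [hψdef] at h
    by_cases hl : l₁ = l₂
    · subst hl
      have : δ * e₁ = δ * e₂ := by linear_combination h
      have he : e₁ = e₂ := mul_left_cancel₀ hδ this
      simp [he]
    · exfalso
      apply hbδE
      have hc0 : algebraMap F K (l₂ - l₁) ≠ 0 := fun hh =>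
        (sub_ne_zero.mpr (Ne.symm hl)) ((algebraMap F K).injective (by rw [hh, map_zero]))
      refine ⟨(e₁ - e₂) * (algebraMap F K (l₂ - l₁))⁻¹,
        hEmul _ (hEsub _ he₁ _ he₂) _ (hEinv _ (hEF (l₂ - l₁))), ?_⟩
      have hδe : δ * (e₁ - e₂) = algebraMap F K (l₂ - l₁) * b := by
        rw [map_sub]; linear_combination h
      show δ * ((e₁ - e₂) * (algebraMap F K (l₂ - l₁))⁻¹) = b
      rw [← mul_assoc, hδe, mul_comm (algebraMap F K (l₂ - l₁)) b, mul_assoc,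
        mul_inv_cancel₀ hc0, mul_one]
  have hrsub : Set.range ψ ⊆ (W : Set K) := by
    rintro _ ⟨⟨⟨e, he⟩, l⟩, rfl⟩
    exact W.add_mem (hWE e he) (by rw [← Algebra.smul_def]; exact W.smul_mem l hbW)
  have hrcard : (Set.range ψ).ncard = N * Fintype.card F := by
    rw [← Nat.card_coe_set_eq, Nat.card_range_of_injective hψinj, Nat.card_prod,
      hEcard, Nat.card_eq_fintype_card]
  have heq : Set.range ψ = (W : Set K) :=
    Set.eq_of_subset_of_ncard_le hrsub (by rw [hrcard, hWcard]) hWfin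
  refine ⟨b, hb', fun x hx => ?_⟩
  have hx' : x ∈ Set.range ψ := by rw [heq]; exact hx
  obtain ⟨⟨⟨e, he⟩, l⟩, hval⟩ := hx'
  exact ⟨e, he, l, hval.symm⟩


/-- If `(A⁻¹ ∩ B) ∪ {0}` contains a one-dimensional `F_{q^{d-1}}`-subspace, where `A`, `B` are
`F_q`-subspaces of size `q^d ≥ q^3`, then `|A⁻¹ ∩ B| ≤ q^{d-1} + 2q^2 - 3`. -/
theorem stmt12 (F : Type*) [Field F] [Fintype F]
    (K : Type*) [Field K] [Algebra F K] [IsAlgClosure F K]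
    (q d : ℕ) (hq : Fintype.card F = q) (hd : 3 ≤ d)
    (A B : Submodule F K)
    (hA : Nat.card A = q ^ d) (hB : Nat.card B = q ^ d)
    (hcontains : ∃ γ : K, γ ≠ 0 ∧
      (fun t => γ * t) '' {t : K | t ^ q ^ (d - 1) = t} ⊆
        ((fun x => x⁻¹) '' ((A : Set K) \ {0}) ∩ (B : Set K)) ∪ {0}) :
    Nat.card ((fun x => x⁻¹) '' ((A : Set K) \ {0}) ∩ (B : Set K) : Set K)
      ≤ q ^ (d - 1) + 2 * q ^ 2 - 3 := by
  classical
  obtain ⟨γ, hγ0, hsub⟩ := hcontains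
  set S : Set K := (fun x => x⁻¹) '' ((A : Set K) \ {0}) ∩ (B : Set K) with hSdef
  set N := q ^ (d - 1) with hNdef
  set E : Set K := {t : K | t ^ N = t} with hEdef
  have hq2 : 2 ≤ q := hq ▸ Fintype.one_lt_card
  -- characteristic
  obtain ⟨p, hpF⟩ := CharP.exists F
  haveI := hpF
  haveI : CharP K p := charP_of_injective_algebraMap (algebraMap F K).injective p
  obtain ⟨k, hpprime, hqpk⟩ := FiniteField.card F p
  haveI : Fact p.Prime := ⟨hpprime⟩
  haveI : IsAlgClosed K := IsAlgClosure.isAlgClosed F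
  rw [hq] at hqpk
  have hdm : d - 1 ≠ 0 := by omega
  have hN1 : 1 < N := by rw [hNdef]; exact Nat.one_lt_pow hdm hq2
  have hN0 : 0 < N := by omega
  have hNpk : N = p ^ ((k : ℕ) * (d - 1)) := by rw [hNdef, hqpk, ← pow_mul]
  have hpN : p ∣ N := by rw [hNpk]; exact dvd_pow_self p (Nat.mul_ne_zero k.pos.ne' hdm)
  -- the subfield E
  have hE0 : (0 : K) ∈ E := by simp [hEdef, zero_pow (by omega : N ≠ 0)]
  have hE1 : (1 : K) ∈ E := by simp [hEdef]
  have hEmul : ∀ x ∈ E, ∀ y ∈ E, x * y ∈ E := by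
    intro x hx y hy
    simp only [hEdef, Set.mem_setOf_eq] at *
    rw [mul_pow, hx, hy]
  have hEinv : ∀ x ∈ E, x⁻¹ ∈ E := by
    intro x hx
    simp only [hEdef, Set.mem_setOf_eq] at *
    rw [inv_pow, hx]
  have hEsub : ∀ x ∈ E, ∀ y ∈ E, x - y ∈ E := by
    intro x hx y hy
    simp only [hEdef, Set.mem_setOf_eq] at *
    rw [hNpk, sub_pow_char_pow, ← hNpk, hx, hy]
  have hEF : ∀ l : F, algebraMap F K l ∈ E := by
    intro l
    simp only [hEdef, Set.mem_setOf_eq, ← map_pow]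
    congr 1
    rw [hNdef, ← hq]
    exact FiniteField.pow_card_pow _ l
  have hEcard : Nat.card E = N := aux_Ecard p N hN1 hpN
  have hEfinite : Finite E := (Nat.card_pos_iff.mp (by rw [hEcard]; omega)).2
  have hEfin : E.Finite := Set.finite_coe_iff.mp hEfinite
  -- γ • E sits inside S ∪ {0}
  have hBE : ∀ e ∈ E, γ * e ∈ (B : Set K) := by
    intro e he
    rcases hsub (Set.mem_image_of_mem _ he) with h | h
    · exact h.2
    · rw [Set.mem_singleton_iff] at h
      rw [h]
      exact B.zero_mem
  have hAE : ∀ e ∈ E, γ⁻¹ * e ∈ (A : Set K) := by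
    intro e he
    by_cases he0 : e = 0
    · rw [he0, mul_zero]; exact A.zero_mem
    · have h1 := hsub (Set.mem_image_of_mem _ (hEinv e he))
      have hne : γ * e⁻¹ ≠ 0 := mul_ne_zero hγ0 (inv_ne_zero he0)
      rcases h1 with h | h
      · obtain ⟨⟨y, hy, hyeq⟩, -⟩ := h
        have hyv : y = γ⁻¹ * e := by
          rw [← inv_inv y]
          show ((fun x => x⁻¹) y)⁻¹ = γ⁻¹ * e
          rw [hyeq, mul_inv, inv_inv]
        rw [← hyv]
        exact hy.1
      · exact absurd h hne
  -- decompositions of B and A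
  have hBcard : Nat.card B = N * Fintype.card F := by
    rw [hB, hNdef, hq, ← pow_succ]
    congr 1
    omega
  have hAcard : Nat.card A = N * Fintype.card F := by
    rw [hA, hNdef, hq, ← pow_succ]
    congr 1
    omega
  have hq2' : 2 ≤ Fintype.card F := by omega
  obtain ⟨b, hbnE, hbdec⟩ := aux_decomp E N hEsub hEmul hEinv hEF hEcard hq2' hN0 B hBcard
    γ hγ0 (fun e he => hBE e he)
  obtain ⟨a, hanE', hadec⟩ := aux_decomp E N hEsub hEmul hEinv hEF hEcard hq2' hN0 A hAcard
    γ⁻¹ (inv_ne_zero hγ0) (fun e he => hAE e he)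
  have hanE : γ * a ∉ E := by rwa [inv_inv] at hanE'
  -- S is finite
  have hBfinite : Finite B := (Nat.card_pos_iff.mp (by rw [hB]; exact pow_pos (by omega) d)).2
  have hBfin : (B : Set K).Finite := Set.finite_coe_iff.mp (by exact hBfinite)
  have hSsub : S ⊆ (B : Set K) := Set.inter_subset_right
  have hSfin : S.Finite := hBfin.subset hSsub
  have hSprop : ∀ x ∈ S, x ≠ 0 ∧ x⁻¹ ∈ (A : Set K) := by
    intro x hx
    obtain ⟨⟨y, hy, hyeq⟩, -⟩ := hx
    have hy0 : y ≠ 0 := fun h0 => hy.2 (by simp [h0])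
    constructor
    · rw [← hyeq]
      exact inv_ne_zero hy0
    · rw [← hyeq]
      show ((fun x => x⁻¹) y)⁻¹ ∈ (A : Set K)
      simp only [inv_inv]
      exact hy.1
  -- partition of S
  set S₁ : Set K := S ∩ {x : K | γ⁻¹ * x ∈ E} with hS₁def
  set S₂ : Set K := S ∩ {x : K | γ⁻¹ * x ∈ E}ᶜ with hS₂def
  have hS12 : S = S₁ ∪ S₂ := (Set.inter_union_compl S _).symm
  -- bound on S₁
  have himg_fin : ((fun e : K => γ * e) '' E).Finite := hEfin.image _
  have h0img : (0 : K) ∈ (fun e : K => γ * e) '' E := ⟨0, hE0, mul_zero γ⟩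
  have hS₁sub : S₁ ⊆ ((fun e : K => γ * e) '' E) \ {0} := by
    rintro x ⟨hxS, hxE⟩
    refine ⟨⟨γ⁻¹ * x, hxE, ?_⟩, ?_⟩
    · show γ * (γ⁻¹ * x) = x
      rw [← mul_assoc, mul_inv_cancel₀ hγ0, one_mul]
    · simp only [Set.mem_singleton_iff]
      exact (hSprop x hxS).1
  have hEncard : E.ncard = N := by rw [← Nat.card_coe_set_eq]; exact hEcard
  have hS₁card : S₁.ncard ≤ N - 1 := by
    have h1 := Set.ncard_le_ncard hS₁sub (himg_fin.diff)
    rwa [Set.ncard_diff_singleton_of_mem h0img,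
      Set.ncard_image_of_injective _ (mul_right_injective₀ hγ0), hEncard] at h1
  -- bound on S₂
  have hS₂fin : S₂.Finite := hSfin.inter_of_left _
  have hchoice : ∀ x : K, ∃ l : F, ∃ m : F, ∃ f : K, f ∈ E ∧ ∃ g : K, g ∈ E ∧
      (x ∈ S₂ → (x = γ * f + algebraMap F K l * b ∧ l ≠ 0 ∧
        x⁻¹ = γ⁻¹ * g + algebraMap F K m * a ∧ m ≠ 0)) := by
    intro x
    by_cases hx : x ∈ S₂
    · have hxS : x ∈ S := hx.1
      have hxE : γ⁻¹ * x ∉ E := hx.2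
      obtain ⟨hx0, hxinvA⟩ := hSprop x hxS
      obtain ⟨f, hfE, l, hfl⟩ := hbdec x (hSsub hxS)
      obtain ⟨g, hgE, m, hgm⟩ := hadec x⁻¹ hxinvA
      refine ⟨l, m, f, hfE, g, hgE, fun _ => ⟨hfl, ?_, hgm, ?_⟩⟩
      · rintro rfl
        apply hxE
        rw [map_zero, zero_mul, add_zero] at hfl
        rw [hfl, ← mul_assoc, inv_mul_cancel₀ hγ0, one_mul]
        exact hfE
      · rintro rfl
        apply hxE
        rw [map_zero, zero_mul, add_zero] at hgm
        have hg0 : g ≠ 0 := by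
          intro h0
          rw [h0, mul_zero] at hgm
          exact hx0 (by rwa [inv_eq_zero] at hgm)
        have hval : γ⁻¹ * x = g⁻¹ := by
          rw [← inv_inv x, hgm, mul_inv, inv_inv, ← mul_assoc, inv_mul_cancel₀ hγ0, one_mul]
        rw [hval]
        exact hEinv g hgE
    · exact ⟨0, 0, 0, hE0, 0, hE0, fun h => absurd h hx⟩
  choose lf mf ff hffE gf hgfE hspec using hchoice
  set T : Finset K := hS₂fin.toFinset with hTdef
  have hmemT : ∀ x, x ∈ T ↔ x ∈ S₂ := fun x => Set.Finite.mem_toFinset _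
  set φ : K → F × F := fun x => (lf x, mf x) with hφdef
  have hfiber : ∀ pr ∈ T.image φ, (T.filter (fun x => φ x = pr)).card ≤ 2 := by
    intro pr _
    by_contra hgt
    push_neg at hgt
    obtain ⟨x₁, x₂, x₃, hx₁, hx₂, hx₃, h12, h13, h23⟩ := Finset.two_lt_card_iff.mp hgt
    simp only [Finset.mem_filter] at hx₁ hx₂ hx₃
    obtain ⟨hx₁T, hφ₁⟩ := hx₁
    obtain ⟨hx₂T, hφ₂⟩ := hx₂
    obtain ⟨hx₃T, hφ₃⟩ := hx₃
    rw [hmemT] at hx₁T hx₂T hx₃T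
    obtain ⟨hd₁, hl₁, hg₁, hm₁⟩ := hspec x₁ hx₁T
    obtain ⟨hd₂, hl₂, hg₂, hm₂⟩ := hspec x₂ hx₂T
    obtain ⟨hd₃, hl₃, hg₃, hm₃⟩ := hspec x₃ hx₃T
    have e2 : lf x₂ = lf x₁ ∧ mf x₂ = mf x₁ := by
      have h := hφ₂.trans hφ₁.symm
      simpa [hφdef, Prod.ext_iff] using h
    have e3 : lf x₃ = lf x₁ ∧ mf x₃ = mf x₁ := by
      have h := hφ₃.trans hφ₁.symm
      simpa [hφdef, Prod.ext_iff] using h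
    rw [e2.1] at hd₂
    rw [e2.2] at hg₂
    rw [e3.1] at hd₃
    rw [e3.2] at hg₃
    set L := algebraMap F K (lf x₁) with hLdef
    set M := algebraMap F K (mf x₁) with hMdef
    have hL0 : L ≠ 0 := fun hh => hl₁ ((algebraMap F K).injective (by rw [← hLdef, hh, map_zero]))
    have hM0 : M ≠ 0 := fun hh => hm₁ ((algebraMap F K).injective (by rw [← hMdef, hh, map_zero]))
    have hLE : L ∈ E := hEF _
    have hME : M ∈ E := hEF _
    have hα : M * (γ * a) ∉ E := by
      intro h
      apply hanE
      have h2 := hEmul _ (hEinv _ hME) _ h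
      rwa [← mul_assoc, inv_mul_cancel₀ hM0, one_mul] at h2
    have hβ : L * (γ⁻¹ * b) ∉ E := by
      intro h
      apply hbnE
      have h2 := hEmul _ (hEinv _ hLE) _ h
      rwa [← mul_assoc, inv_mul_cancel₀ hL0, one_mul] at h2
    have hγγ : γ * γ⁻¹ = 1 := mul_inv_cancel₀ hγ0
    have mk : ∀ x : K, x ∈ S₂ → ∀ fx gx : K, x = γ * fx + L * b → x⁻¹ = γ⁻¹ * gx + M * a →
        (fx + L * (γ⁻¹ * b)) * (gx + M * (γ * a))
          = M * (γ * a) * (L * (γ⁻¹ * b)) - (L * M * (b * a) - 1) := by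
      intro x hxS₂ fx gx hdx hgx
      have hxS : x ∈ S := hxS₂.1
      have hx0 : x ≠ 0 := (hSprop x hxS).1
      have hxx : (γ * fx + L * b) * (γ⁻¹ * gx + M * a) = 1 := by
        rw [← hdx, ← hgx]
        exact mul_inv_cancel₀ hx0
      linear_combination hxx - fx * gx * hγγ
    have k₁ := mk x₁ hx₁T _ _ hd₁ hg₁
    have k₂ := mk x₂ hx₂T _ _ hd₂ hg₂
    have k₃ := mk x₃ hx₃T _ _ hd₃ hg₃
    have hf12 : ff x₁ ≠ ff x₂ := fun h => h12 (by rw [hd₁, hd₂, h])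
    have hf13 : ff x₁ ≠ ff x₃ := fun h => h13 (by rw [hd₁, hd₃, h])
    have hf23 := aux_three E hE0 hE1 hEsub hEmul hEinv hα hβ (hffE x₁) (hffE x₂) (hffE x₃)
      (hgfE x₁) (hgfE x₂) (hgfE x₃) k₁ k₂ k₃ hf12 hf13
    exact h23 (by rw [hd₂, hd₃, hf23])
  have hTbound : T.card ≤ 2 * ((q - 1) * (q - 1)) := by
    have h1 := Finset.card_le_mul_card_image T 2 hfiber
    have h2 : T.image φ ⊆ (Finset.univ.erase (0 : F)) ×ˢ (Finset.univ.erase (0 : F)) := by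
      intro pr hpr
      obtain ⟨x, hxT, hxpr⟩ := Finset.mem_image.mp hpr
      rw [hmemT] at hxT
      obtain ⟨-, hl, -, hm⟩ := hspec x hxT
      rw [← hxpr]
      simp [hφdef, Finset.mem_product, Finset.mem_erase, hl, hm]
    have h3 := Finset.card_le_card h2
    rw [Finset.card_product, Finset.card_erase_of_mem (Finset.mem_univ 0),
      Finset.card_univ, hq] at h3
    omega
  have hS₂card : S₂.ncard ≤ 2 * ((q - 1) * (q - 1)) := by
    rw [Set.ncard_eq_toFinset_card _ hS₂fin]
    exact hTbound
  -- putting things together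
  rw [Nat.card_coe_set_eq]
  have hun : S.ncard ≤ S₁.ncard + S₂.ncard := by
    calc S.ncard = (S₁ ∪ S₂).ncard := by rw [← hS12]
      _ ≤ S₁.ncard + S₂.ncard := Set.ncard_union_le _ _
  have harith : (q - 1) * (q - 1) + 2 * q = q ^ 2 + 1 := by
    obtain ⟨r, rfl⟩ : ∃ r, q = r + 2 := ⟨q - 2, by omega⟩
    have h1 : r + 2 - 1 = r + 1 := by omega
    rw [h1]
    ring
  omega
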